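/- arXiv:1909.01873 — 2 statements merged into one kernel-verified Lean document; each statement's English description precedes it below -/
import Mathlib

section
/- Let φ be a Schwartz function on ℝⁿ, A symmetric positive definite, b ∈ ℝⁿ, c ∈ ℝ. Define u(x,t) = ∫_{ℝⁿ} G(x-y,t)φ(y)dy where G(x,t) = e^{ct}/((2√(πt))ⁿ det(A^{1/2})) exp(-|A^{-1/2}(x+tb)|²/(4t)). Then the Fourier transform of u(·,t) in x equals φ̂(ξ) · exp({-(Aξ,ξ) + i(b,ξ) + c}t) for all ξ ∈ ℝⁿ and t > 0. -/
open MeasureTheory Real Matrix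

/-- The fundamental solution `G(x,t)`; `S` plays the role of `A^{1/2}`. -/
noncomputable def fundSol (n : ℕ) (S : Matrix (Fin n) (Fin n) ℝ) (b : Fin n → ℝ) (c : ℝ)
    (x : Fin n → ℝ) (t : ℝ) : ℝ :=
  Real.exp (c * t) / ((2 * Real.sqrt (π * t)) ^ n * S.det) *
    Real.exp (-(S⁻¹.mulVec (x + t • b) ⬝ᵥ S⁻¹.mulVec (x + t • b)) / (4 * t))

section Aux

variable {n : ℕ}

private lemma mapVolAux (S : Matrix (Fin n) (Fin n) ℝ) (hdet : S.det ≠ 0) :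
    Measure.map (fun w : Fin n → ℝ => S.mulVec w) volume
      = ENNReal.ofReal |S.det⁻¹| • volume := by
  have hfun : (fun w : Fin n → ℝ => S.mulVec w) = ⇑(Matrix.toLin' S) := by
    ext w i; simp [Matrix.toLin'_apply]
  have h : LinearMap.det (Matrix.toLin' S) ≠ 0 := by rwa [LinearMap.det_toLin']
  rw [hfun, Measure.map_linearMap_addHaar_pi_eq_smul_addHaar h, LinearMap.det_toLin']

private lemma embAux (S : Matrix (Fin n) (Fin n) ℝ) (hS : S.PosDef) :
    MeasurableEmbedding (fun w : Fin n → ℝ => S.mulVec w) := by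
  have h : Invertible S := S.invertibleOfIsUnitDet hS.det_pos.ne'.isUnit
  have hfun : (fun w : Fin n → ℝ => S.mulVec w)
      = ⇑((Matrix.toLinearEquiv' S h).toContinuousLinearEquiv.toHomeomorph) := by
    ext w i; simp [Matrix.toLinearEquiv', Matrix.toLin'_apply]
  rw [hfun]
  exact (Matrix.toLinearEquiv' S h).toContinuousLinearEquiv.toHomeomorph.measurableEmbedding

private lemma intCompAux (S : Matrix (Fin n) (Fin n) ℝ) (hS : S.PosDef) (g : (Fin n → ℝ) → ℂ)
    (hg : Continuous g) :
    ∫ z : Fin n → ℝ, g z = S.det * ∫ w : Fin n → ℝ, g (S.mulVec w) := by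
  have hdet := hS.det_pos
  have hmeas : Measurable fun w : Fin n → ℝ => S.mulVec w := (embAux S hS).measurable
  have : ∫ w : Fin n → ℝ, g (S.mulVec w)
      = ∫ z, g z ∂(Measure.map (fun w : Fin n → ℝ => S.mulVec w) volume) := by
    rw [integral_map hmeas.aemeasurable hg.aestronglyMeasurable]
  rw [this, mapVolAux S hdet.ne', integral_smul_measure,
    ENNReal.toReal_ofReal (by positivity), abs_of_pos (by positivity), Complex.real_smul,
    ← mul_assoc, ← Complex.ofReal_mul, mul_inv_cancel₀ hdet.ne', Complex.ofReal_one, one_mul]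

private lemma integrableCompAux {E : Type*} [NormedAddCommGroup E]
    (S : Matrix (Fin n) (Fin n) ℝ) (hS : S.PosDef) (g : (Fin n → ℝ) → E) :
    Integrable (fun w : Fin n → ℝ => g (S.mulVec w)) ↔ Integrable g := by
  have hdet := hS.det_pos
  have h1 : Integrable (fun w : Fin n → ℝ => g (S.mulVec w))
      ↔ Integrable g (Measure.map (fun w : Fin n → ℝ => S.mulVec w) volume) :=
    ((embAux S hS).integrable_map_iff).symm
  rw [h1, mapVolAux S hdet.ne',
    integrable_smul_measure (by simp [abs_of_pos, hdet, (inv_pos.2 hdet).ne'])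
      ENNReal.ofReal_ne_top]

private lemma cont_fundSol (S : Matrix (Fin n) (Fin n) ℝ) (b : Fin n → ℝ) (c t : ℝ) :
    Continuous fun x : Fin n → ℝ => fundSol n S b c x t := by
  unfold fundSol
  have h1 : Continuous fun x : Fin n → ℝ => S⁻¹.mulVec (x + t • b) :=
    continuous_const.matrix_mulVec (continuous_id.add continuous_const)
  exact continuous_const.mul
    (Real.continuous_exp.comp (((h1.dotProduct h1).neg).div_const _))

private lemma mulVec_dot (S : Matrix (Fin n) (Fin n) ℝ) (hsym : Sᵀ = S) (w ξ : Fin n → ℝ) :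
    S.mulVec w ⬝ᵥ ξ = w ⬝ᵥ S.mulVec ξ := by
  rw [dotProduct_comm, dotProduct_mulVec, ← hsym, vecMul_transpose, hsym, dotProduct_comm]

private lemma invMulVecMulVec (S : Matrix (Fin n) (Fin n) ℝ) (hS : S.PosDef) (w : Fin n → ℝ) :
    S⁻¹.mulVec (S.mulVec w) = w := by
  rw [Matrix.mulVec_mulVec, Matrix.nonsing_inv_mul S hS.det_pos.ne'.isUnit, Matrix.one_mulVec]

private lemma keyAux (S : Matrix (Fin n) (Fin n) ℝ) (hS : S.PosDef)
    (b : Fin n → ℝ) (c : ℝ) (ξ : Fin n → ℝ) (t : ℝ) (ht : 0 < t) (w : Fin n → ℝ) :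
    Complex.exp (-(Complex.I * (((S.mulVec w + -(t • b)) ⬝ᵥ ξ : ℝ) : ℂ)))
        * ((fundSol n S b c (S.mulVec w + -(t • b)) t : ℝ) : ℂ)
      = (Complex.exp (Complex.I * ((b ⬝ᵥ ξ : ℝ) : ℂ) * (t : ℂ))
            * ((Real.exp (c * t) / ((2 * Real.sqrt (π * t)) ^ n * S.det) : ℝ) : ℂ)) *
          Complex.exp (-(∑ i, ((((4*t)⁻¹ : ℝ)) : ℂ) * (w i : ℂ)^2)
            + ∑ i, (-(Complex.I * ((S.mulVec ξ i : ℝ) : ℂ))) * (w i : ℂ)) := by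
  have hsym : Sᵀ = S := by exact (show S.IsSymm by simpa using hS.1)
  set η : Fin n → ℝ := S.mulVec ξ with hη
  set C : ℝ := Real.exp (c * t) / ((2 * Real.sqrt (π * t)) ^ n * S.det) with hC
  have h1 : S.mulVec w + -(t • b) + t • b = S.mulVec w := by abel
  have h2 : (S.mulVec w + -(t • b)) ⬝ᵥ ξ = w ⬝ᵥ η - t * (b ⬝ᵥ ξ) := by
    rw [add_dotProduct, neg_dotProduct, smul_dotProduct, mulVec_dot S hsym, smul_eq_mul]
    ring
  have hsum1 : ∑ i, (-(Complex.I * ((η i : ℝ) : ℂ))) * (w i : ℂ)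
      = -(Complex.I * ((w ⬝ᵥ η : ℝ) : ℂ)) := by
    simp only [dotProduct, Complex.ofReal_sum, Complex.ofReal_mul, Finset.mul_sum,
      ← Finset.sum_neg_distrib]
    exact Finset.sum_congr rfl fun i _ => by ring
  have hsum2 : (∑ i, ((((4*t)⁻¹ : ℝ)) : ℂ) * (w i : ℂ)^2)
      = ((w ⬝ᵥ w : ℝ) : ℂ) / (4 * (t : ℂ)) := by
    simp only [dotProduct, Complex.ofReal_sum, Complex.ofReal_mul, Finset.sum_div]
    refine Finset.sum_congr rfl fun i _ => ?_
    push_cast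
    field_simp
  simp only [fundSol, h1, invMulVecMulVec S hS, h2, ← hC]
  rw [hsum1, hsum2]
  push_cast [Complex.ofReal_exp]
  rw [show Complex.exp (-(Complex.I * (((w ⬝ᵥ η : ℝ):ℂ) - (t:ℂ) * ((b ⬝ᵥ ξ : ℝ):ℂ))))
        * ((C:ℂ) * Complex.exp (-((w ⬝ᵥ w : ℝ):ℂ) / (4 * (t:ℂ))))
      = (C:ℂ) * (Complex.exp (-(Complex.I * (((w ⬝ᵥ η : ℝ):ℂ) - (t:ℂ) * ((b ⬝ᵥ ξ : ℝ):ℂ))))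
        * Complex.exp (-((w ⬝ᵥ w : ℝ):ℂ) / (4 * (t:ℂ)))) from by ring,
    ← Complex.exp_add,
    show Complex.exp (Complex.I * ((b ⬝ᵥ ξ : ℝ):ℂ) * (t:ℂ)) * (C:ℂ)
        * Complex.exp (-(((w ⬝ᵥ w : ℝ):ℂ) / (4 * (t:ℂ))) + -(Complex.I * ((w ⬝ᵥ η : ℝ):ℂ)))
      = (C:ℂ) * (Complex.exp (Complex.I * ((b ⬝ᵥ ξ : ℝ):ℂ) * (t:ℂ))
        * Complex.exp (-(((w ⬝ᵥ w : ℝ):ℂ) / (4 * (t:ℂ))) + -(Complex.I * ((w ⬝ᵥ η : ℝ):ℂ))))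
      from by ring,
    ← Complex.exp_add]
  congr 1
  ring

private lemma fourier_fundSol (S : Matrix (Fin n) (Fin n) ℝ) (hS : S.PosDef)
    (b : Fin n → ℝ) (c : ℝ) (ξ : Fin n → ℝ) (t : ℝ) (ht : 0 < t) :
    ∫ z : Fin n → ℝ,
        Complex.exp (-(Complex.I * ((z ⬝ᵥ ξ : ℝ) : ℂ))) * ((fundSol n S b c z t : ℝ) : ℂ)
      = Complex.exp ((-(((S * S).mulVec ξ ⬝ᵥ ξ : ℝ) : ℂ) + Complex.I * ((b ⬝ᵥ ξ : ℝ) : ℂ)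
          + (c : ℂ)) * (t : ℂ)) := by
  have hdet := hS.det_pos
  have hsym : Sᵀ = S := by exact (show S.IsSymm by simpa using hS.1)
  have ht' : (t : ℂ) ≠ 0 := Complex.ofReal_ne_zero.2 ht.ne'
  set η : Fin n → ℝ := S.mulVec ξ with hη
  set C : ℝ := Real.exp (c * t) / ((2 * Real.sqrt (π * t)) ^ n * S.det) with hC
  set F : (Fin n → ℝ) → ℂ := fun z =>
    Complex.exp (-(Complex.I * ((z ⬝ᵥ ξ : ℝ) : ℂ))) * ((fundSol n S b c z t : ℝ) : ℂ) with hF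
  have hcont : Continuous F := by
    apply Continuous.mul
    · exact Complex.continuous_exp.comp
        ((continuous_const.mul (Complex.continuous_ofReal.comp
          (continuous_id.dotProduct continuous_const))).neg)
    · exact Complex.continuous_ofReal.comp (cont_fundSol S b c t)
  have step1 : ∫ z, F z = ∫ z, F (z + -(t • b)) :=
    (integral_add_right_eq_self F (-(t • b))).symm
  have step2 : ∫ z, F (z + -(t • b)) = S.det * ∫ w, F (S.mulVec w + -(t • b)) :=
    intCompAux S hS _ (hcont.comp (continuous_id.add continuous_const))
  have key : ∀ w : Fin n → ℝ, F (S.mulVec w + -(t • b))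
      = (Complex.exp (Complex.I * ((b ⬝ᵥ ξ : ℝ) : ℂ) * (t : ℂ)) * (C : ℂ)) *
        Complex.exp (-(∑ i, ((((4*t)⁻¹ : ℝ)) : ℂ) * (w i : ℂ)^2)
          + ∑ i, (-(Complex.I * ((η i : ℝ) : ℂ))) * (w i : ℂ)) :=
    fun w => keyAux S hS b c ξ t ht w
  rw [step1, step2]
  simp only [key]
  rw [MeasureTheory.integral_const_mul,
    GaussianFourier.integral_cexp_neg_sum_mul_add (fun i => by simp; positivity)
      (fun i => -(Complex.I * ((η i : ℝ) : ℂ)))]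
  have hfac : ∀ i : Fin n,
      ((π : ℂ) / (((4*t)⁻¹ : ℝ) : ℂ)) ^ (1/2 : ℂ)
        * Complex.exp ((-(Complex.I * ((η i : ℝ) : ℂ)))^2 / (4 * (((4*t)⁻¹ : ℝ) : ℂ)))
      = (((2 * Real.sqrt (π*t)) : ℝ) : ℂ) * Complex.exp (-((t:ℂ) * ((η i : ℝ):ℂ)^2)) := by
    intro i
    have hbase : ((π:ℝ) : ℂ) / (((4*t)⁻¹ : ℝ) : ℂ) = ((4*(π*t) : ℝ) : ℂ) := by
      push_cast
      field_simp
    have hpow : ((4*(π*t) : ℝ) : ℂ) ^ (1/2 : ℂ) = (((2 * Real.sqrt (π*t)) : ℝ) : ℂ) := by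
      have h : Real.sqrt (4*(π*t)) = 2 * Real.sqrt (π*t) := by
        rw [show (4:ℝ)*(π*t) = (2*Real.sqrt (π*t))^2 by
          rw [mul_pow, Real.sq_sqrt (by positivity)]; ring]
        exact Real.sqrt_sq (by positivity)
      rw [show (1/2:ℂ) = ((1/2:ℝ):ℂ) by norm_num, ← Complex.ofReal_cpow (by positivity)]
      rw [← Real.sqrt_eq_rpow, h]
    have hexp : (-(Complex.I * ((η i : ℝ):ℂ)))^2 / (4 * (((4*t)⁻¹ : ℝ) : ℂ))
        = -((t:ℂ) * ((η i : ℝ):ℂ)^2) := by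
      push_cast
      rw [mul_inv, show (-(Complex.I * ((η i : ℝ):ℂ)))^2
          = Complex.I^2 * ((η i : ℝ):ℂ)^2 by ring, Complex.I_sq]
      field_simp
    rw [hbase, hpow, hexp]
  simp only [hfac]
  rw [Finset.prod_mul_distrib, Finset.prod_const, Finset.card_univ, Fintype.card_fin,
    ← Complex.exp_sum]
  have hAA : η ⬝ᵥ η = (S * S).mulVec ξ ⬝ᵥ ξ := by
    calc η ⬝ᵥ η = ξ ⬝ᵥ S.mulVec η := mulVec_dot S hsym ξ η
    _ = ξ ⬝ᵥ (S * S).mulVec ξ := by rw [hη, Matrix.mulVec_mulVec]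
    _ = (S * S).mulVec ξ ⬝ᵥ ξ := dotProduct_comm _ _
  have hsumAA : ∑ i : Fin n, -((t:ℂ) * ((η i : ℝ):ℂ)^2)
      = -((t:ℂ) * (((S * S).mulVec ξ ⬝ᵥ ξ : ℝ):ℂ)) := by
    rw [← hAA]
    simp only [dotProduct, Complex.ofReal_sum, Complex.ofReal_mul, Finset.mul_sum,
      ← Finset.sum_neg_distrib]
    exact Finset.sum_congr rfl fun i _ => by ring
  rw [hsumAA]
  have hr : ((2 * Real.sqrt (π*t)) ^ n : ℝ) ≠ 0 := by positivity
  have hCc : (C : ℂ) = Complex.exp (((c*t : ℝ)):ℂ)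
      / ((((2 * Real.sqrt (π*t)) ^ n : ℝ):ℂ) * ((S.det : ℝ):ℂ)) := by
    rw [hC]
    push_cast [Complex.ofReal_exp]
    ring
  rw [hCc, ← Complex.ofReal_pow]
  have hrc : (((2 * Real.sqrt (π*t)) ^ n : ℝ):ℂ) ≠ 0 := Complex.ofReal_ne_zero.2 hr
  have hdc : ((S.det : ℝ):ℂ) ≠ 0 := Complex.ofReal_ne_zero.2 hdet.ne'
  have h1 : ((Real.sqrt π : ℝ):ℂ) ≠ 0 := Complex.ofReal_ne_zero.2 (Real.sqrt_ne_zero'.2 pi_pos)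
  have h2 : ((Real.sqrt t : ℝ):ℂ) ≠ 0 := Complex.ofReal_ne_zero.2 (Real.sqrt_ne_zero'.2 ht)
  rw [show ((-((((S*S).mulVec ξ ⬝ᵥ ξ : ℝ)):ℂ)) + Complex.I*(((b⬝ᵥξ : ℝ)):ℂ) + (c:ℂ)) * (t:ℂ)
      = (Complex.I*(((b⬝ᵥξ : ℝ)):ℂ)*(t:ℂ) + ((c*t : ℝ):ℂ))
        + (-((t:ℂ)*((((S*S).mulVec ξ ⬝ᵥ ξ : ℝ)):ℂ))) from by push_cast; ring,
    Complex.exp_add, ← Complex.exp_add]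
  field_simp
  simp only [Complex.exp_add, Complex.exp_sub, Complex.exp_neg]

private lemma integrable_F (S : Matrix (Fin n) (Fin n) ℝ) (hS : S.PosDef)
    (b : Fin n → ℝ) (c : ℝ) (ξ : Fin n → ℝ) (t : ℝ) (ht : 0 < t) :
    Integrable (fun z : Fin n → ℝ =>
      Complex.exp (-(Complex.I * ((z ⬝ᵥ ξ : ℝ) : ℂ))) * ((fundSol n S b c z t : ℝ) : ℂ)) := by
  set F : (Fin n → ℝ) → ℂ := fun z =>
    Complex.exp (-(Complex.I * ((z ⬝ᵥ ξ : ℝ) : ℂ))) * ((fundSol n S b c z t : ℝ) : ℂ) with hF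
  have h3 : Integrable (fun w : Fin n → ℝ => F (S.mulVec w + -(t • b))) := by
    have : (fun w : Fin n → ℝ => F (S.mulVec w + -(t • b)))
        = fun w => (Complex.exp (Complex.I * ((b ⬝ᵥ ξ : ℝ) : ℂ) * (t : ℂ))
            * ((Real.exp (c * t) / ((2 * Real.sqrt (π * t)) ^ n * S.det) : ℝ) : ℂ)) *
          Complex.exp (-(∑ i, ((((4*t)⁻¹ : ℝ)) : ℂ) * (w i : ℂ)^2)
            + ∑ i, (-(Complex.I * ((S.mulVec ξ i : ℝ) : ℂ))) * (w i : ℂ)) := by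
      funext w
      exact keyAux S hS b c ξ t ht w
    rw [this]
    exact (GaussianFourier.integrable_cexp_neg_sum_mul_add (fun i => by simp; positivity)
      (fun i => -(Complex.I * ((S.mulVec ξ i : ℝ) : ℂ)))).const_mul _
  have h4 : Integrable (fun z : Fin n → ℝ => F (z + -(t • b))) :=
    (integrableCompAux S hS _).mp h3
  have h5 := h4.comp_add_right (t • b)
  simpa using h5

end Aux

/-- For Schwartz `φ`, the Fourier transform (with normalization
`û(ξ) = (2π)^{-n/2}∫ e^{-i(x,ξ)}u(x)dx`) of `u(·,t) = G(·,t) * φ` equals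
`φ̂(ξ) · exp({-(Aξ,ξ) + i(b,ξ) + c}t)`. -/
theorem fourier_transform_solution (n : ℕ) (A S : Matrix (Fin n) (Fin n) ℝ)
    (hAsymm : A.IsSymm) (hA : A.PosDef) (hS : S.PosDef) (hSA : S * S = A)
    (b : Fin n → ℝ) (c : ℝ) (φ : SchwartzMap (Fin n → ℝ) ℝ)
    (ξ : Fin n → ℝ) (t : ℝ) (ht : 0 < t) :
    ((2 * π : ℝ) ^ (-(n : ℝ) / 2) : ℝ) *
        (∫ x : Fin n → ℝ, Complex.exp (-(Complex.I * ((x ⬝ᵥ ξ : ℝ) : ℂ))) *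
          ((∫ y : Fin n → ℝ, fundSol n S b c (x - y) t * φ y : ℝ) : ℂ)) =
      (((2 * π : ℝ) ^ (-(n : ℝ) / 2) : ℝ) *
          (∫ x : Fin n → ℝ, Complex.exp (-(Complex.I * ((x ⬝ᵥ ξ : ℝ) : ℂ))) * (φ x : ℂ))) *
        Complex.exp ((-((A.mulVec ξ ⬝ᵥ ξ : ℝ) : ℂ) + Complex.I * ((b ⬝ᵥ ξ : ℝ) : ℂ) + (c : ℂ))
          * (t : ℂ)) := by
  set E : ℂ := Complex.exp ((-((A.mulVec ξ ⬝ᵥ ξ : ℝ) : ℂ) + Complex.I * ((b ⬝ᵥ ξ : ℝ) : ℂ)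
    + (c : ℂ)) * (t : ℂ)) with hE
  have hGint : Integrable (fun z : Fin n → ℝ => ((fundSol n S b c z t : ℝ) : ℂ)) := by
    have := integrable_F S hS b c 0 t ht
    simpa using this
  have hφint : Integrable (fun y : Fin n → ℝ => ((φ y : ℝ) : ℂ)) := (φ.integrable).ofReal
  set F₂ : ((Fin n → ℝ) × (Fin n → ℝ)) → ℂ := fun p =>
    Complex.exp (-(Complex.I * ((p.1 ⬝ᵥ ξ : ℝ) : ℂ))) *
      ((fundSol n S b c (p.1 - p.2) t * φ p.2 : ℝ) : ℂ) with hF₂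
  have hF₂int : Integrable F₂ (volume.prod volume) := by
    have hconv : Integrable (fun p : (Fin n → ℝ) × (Fin n → ℝ) =>
        ((φ p.2 : ℝ) : ℂ) * ((fundSol n S b c (p.1 - p.2) t : ℝ) : ℂ)) (volume.prod volume) :=
      hφint.convolution_integrand (ContinuousLinearMap.mul ℂ ℂ) hGint
    have hcnt : Continuous (fun p : (Fin n → ℝ) × (Fin n → ℝ) =>
        Complex.exp (-(Complex.I * ((p.1 ⬝ᵥ ξ : ℝ) : ℂ)))) :=
      Complex.continuous_exp.comp ((continuous_const.mul (Complex.continuous_ofReal.comp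
        ((continuous_fst.dotProduct continuous_const)))).neg)
    have hb := hconv.bdd_mul hcnt.aestronglyMeasurable
      (c := 1) (Filter.Eventually.of_forall fun p => by
        rw [Complex.norm_exp]
        have h0 : (-(Complex.I * ((p.1 ⬝ᵥ ξ : ℝ) : ℂ))).re = 0 := by simp
        rw [h0, Real.exp_zero])
    have heq : (fun x : (Fin n → ℝ) × (Fin n → ℝ) =>
        Complex.exp (-(Complex.I * ((x.1 ⬝ᵥ ξ : ℝ) : ℂ))) *
          (((φ x.2 : ℝ) : ℂ) * ((fundSol n S b c (x.1 - x.2) t : ℝ) : ℂ))) = F₂ := by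
      funext p
      rw [hF₂]
      push_cast
      ring
    exact heq ▸ hb
  have cast1 : ∀ x : Fin n → ℝ, ((∫ y, fundSol n S b c (x - y) t * φ y : ℝ) : ℂ)
      = ∫ y, ((fundSol n S b c (x - y) t * φ y : ℝ) : ℂ) := fun x => (integral_ofReal).symm
  have swap : (∫ x : Fin n → ℝ, Complex.exp (-(Complex.I * ((x ⬝ᵥ ξ : ℝ) : ℂ))) *
        ((∫ y : Fin n → ℝ, fundSol n S b c (x - y) t * φ y : ℝ) : ℂ))
      = ∫ y : Fin n → ℝ, ∫ x : Fin n → ℝ, F₂ (x, y) := by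
    simp_rw [cast1, ← MeasureTheory.integral_const_mul]
    exact integral_integral_swap hF₂int
  have inner : ∀ y : Fin n → ℝ, (∫ x : Fin n → ℝ, F₂ (x, y))
      = (Complex.exp (-(Complex.I * ((y ⬝ᵥ ξ : ℝ) : ℂ))) * ((φ y : ℝ) : ℂ)) * E := by
    intro y
    rw [← integral_add_right_eq_self (fun x => F₂ (x, y)) y]
    have hpt : ∀ x : Fin n → ℝ, F₂ (x + y, y)
        = (Complex.exp (-(Complex.I * ((y ⬝ᵥ ξ : ℝ) : ℂ))) * ((φ y : ℝ) : ℂ)) *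
          (Complex.exp (-(Complex.I * ((x ⬝ᵥ ξ : ℝ) : ℂ))) * ((fundSol n S b c x t : ℝ) : ℂ)) := by
      intro x
      simp only [hF₂, add_sub_cancel_right, add_dotProduct]
      push_cast
      rw [show -(Complex.I * (((x ⬝ᵥ ξ : ℝ):ℂ) + ((y ⬝ᵥ ξ : ℝ):ℂ)))
          = -(Complex.I * ((x ⬝ᵥ ξ : ℝ):ℂ)) + -(Complex.I * ((y ⬝ᵥ ξ : ℝ):ℂ)) from by ring,
        Complex.exp_add]
      ring
    simp_rw [hpt]
    rw [MeasureTheory.integral_const_mul, fourier_fundSol S hS b c ξ t ht, hSA]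
  rw [swap]
  simp_rw [inner]
  rw [integral_mul_const]
  ring
end

section
/- For a symmetric positive definite real n×n matrix A, t > 0, c ∈ ℝ, b ∈ ℝⁿ, unit vector ℓ, and conjugate exponents p, p' with 1 < p' < ∞, one has the identity (1/(2t(2√(πt))ⁿ det A^{1/2})) · (∫_{ℝⁿ} |(A⁻¹z, ℓ)|^{p'} e^{-p'|A^{-1/2}z|²/(4t)} dz)^{1/p'} = |A^{-1/2}ℓ| / (2ⁿπ^{(n+p-1)/2} det A^{1/2})^{1/p} · (Γ((p'+1)/2)/p'^{(n+p')/2})^{1/p'} · 1/t^{(n+p)/(2p)}. -/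
open MeasureTheory Real Matrix

lemma cov_mulVec {n : ℕ} (M : Matrix (Fin n) (Fin n) ℝ) (hM : M.det ≠ 0)
    (g : (Fin n → ℝ) → ℝ) :
    ∫ z : Fin n → ℝ, g z = |M.det| * ∫ y : Fin n → ℝ, g (M.mulVec y) := by
  have hI : Invertible M := M.invertibleOfIsUnitDet (isUnit_iff_ne_zero.2 hM)
  let e : (Fin n → ℝ) ≃ₗ[ℝ] (Fin n → ℝ) := M.toLinearEquiv' hI
  have hdet : LinearMap.det (e : (Fin n → ℝ) →ₗ[ℝ] (Fin n → ℝ)) = M.det := by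
    have : (e : (Fin n → ℝ) →ₗ[ℝ] (Fin n → ℝ)) = Matrix.toLin' M :=
      M.toLinearEquiv'_apply hI
    rw [this, ← Matrix.toLin'_toMatrix' (Matrix.toLin' M)]
    simp [LinearMap.det_toLin']
  have hne : LinearMap.det (e : (Fin n → ℝ) →ₗ[ℝ] (Fin n → ℝ)) ≠ 0 := by rw [hdet]; exact hM
  have hmap := MeasureTheory.Measure.map_linearMap_addHaar_eq_smul_addHaar
    (volume : Measure (Fin n → ℝ)) hne
  -- e as a measurable equiv
  let ec : (Fin n → ℝ) ≃L[ℝ] (Fin n → ℝ) := e.toContinuousLinearEquiv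
  let em : (Fin n → ℝ) ≃ᵐ (Fin n → ℝ) := ec.toHomeomorph.toMeasurableEquiv
  have hem : Measure.map em volume = ENNReal.ofReal |M.det|⁻¹ • volume := by
    rw [show (em : (Fin n → ℝ) → (Fin n → ℝ)) = (e : (Fin n → ℝ) →ₗ[ℝ] (Fin n → ℝ)) from rfl,
      hmap, hdet, abs_inv]
  have h1 : ∫ y, g (em y) = ∫ z, g z ∂(Measure.map em volume) :=
    (MeasureTheory.integral_map_equiv em g).symm
  have h2 : ∫ z, g z ∂(Measure.map em volume) = |M.det|⁻¹ * ∫ z, g z := by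
    rw [hem, integral_smul_measure, ENNReal.toReal_ofReal (by positivity), smul_eq_mul]
  have h3 : ∫ y, g (M.mulVec y) = |M.det|⁻¹ * ∫ z, g z := by
    rw [← h2, ← h1]
    rfl
  rw [h3, ← mul_assoc, mul_inv_cancel₀ (by simpa using hM), one_mul]

lemma moment1d {b q : ℝ} (hb : 0 < b) (hq : -1 < q) :
    ∫ x : ℝ, |x| ^ q * Real.exp (-b * x ^ 2)
      = b ^ (-(q + 1) / 2) * Real.Gamma ((q + 1) / 2) := by
  have h1 : ∫ x : ℝ, |x| ^ q * Real.exp (-b * x ^ 2)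
      = ∫ x : ℝ, (fun y => y ^ q * Real.exp (-b * y ^ 2)) |x| := by
    congr 1; ext x; simp [sq_abs]
  rw [h1, integral_comp_abs (f := fun y => y ^ q * Real.exp (-b * y ^ 2))]
  have h2 : ∫ x in Set.Ioi (0:ℝ), x ^ q * Real.exp (-b * x ^ 2)
      = ∫ x in Set.Ioi (0:ℝ), x ^ q * Real.exp (-b * x ^ (2:ℝ)) := by
    refine setIntegral_congr_fun measurableSet_Ioi (fun x hx => ?_)
    rw [Real.rpow_two]
  rw [h2, integral_rpow_mul_exp_neg_mul_rpow two_pos hq hb]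
  ring


lemma euclid_moment {n : ℕ} (i₀ : Fin n) {a q : ℝ} (ha : 0 < a) (hq : -1 < q)
    (v : EuclideanSpace ℝ (Fin n)) (hv : v ≠ 0) :
    ∫ x : EuclideanSpace ℝ (Fin n), |(inner ℝ x v : ℝ)| ^ q * Real.exp (-a * ‖x‖ ^ 2)
      = ‖v‖ ^ q * (a ^ (-(q + 1) / 2) * Real.Gamma ((q + 1) / 2))
          * Real.sqrt (π / a) ^ (n - 1) := by
  have hvn : 0 < ‖v‖ := norm_pos_iff.2 hv
  set u : EuclideanSpace ℝ (Fin n) := ‖v‖⁻¹ • v with hu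
  have hun : ‖u‖ = 1 := by
    rw [hu, norm_smul, norm_inv, norm_norm, inv_mul_cancel₀ hvn.ne']
  -- orthonormal basis with b i₀ = u
  have hortho : Orthonormal ℝ (({i₀} : Set (Fin n)).restrict (fun _ => u)) := by
    constructor
    · intro i; exact hun
    · intro i j hij
      exact absurd (Subsingleton.elim i j) hij
  obtain ⟨b, hb⟩ := hortho.exists_orthonormalBasis_extension_of_card_eq
    (by simp [finrank_euclideanSpace_fin])
  have hbu : b i₀ = u := hb i₀ (Set.mem_singleton i₀)
  -- Step 1: pull out ‖v‖
  have hvu : v = ‖v‖ • u := by rw [hu, smul_inv_smul₀ hvn.ne']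
  have hinner : ∀ x : EuclideanSpace ℝ (Fin n), (inner ℝ x v : ℝ) = ‖v‖ * (inner ℝ x u : ℝ) := by
    intro x
    conv_lhs => rw [hvu]
    exact real_inner_smul_right x u ‖v‖
  have step1 : ∀ x : EuclideanSpace ℝ (Fin n),
      |(inner ℝ x v : ℝ)| ^ q * Real.exp (-a * ‖x‖ ^ 2)
        = ‖v‖ ^ q * (|(inner ℝ x u : ℝ)| ^ q * Real.exp (-a * ‖x‖ ^ 2)) := by
    intro x
    rw [hinner, abs_mul, abs_of_nonneg (norm_nonneg v),
      Real.mul_rpow (norm_nonneg v) (abs_nonneg _), mul_assoc]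
  simp_rw [step1, integral_const_mul]
  -- Step 2: rotation
  have hrot : ∫ x : EuclideanSpace ℝ (Fin n), |(inner ℝ x u : ℝ)| ^ q * Real.exp (-a * ‖x‖ ^ 2)
      = ∫ y : EuclideanSpace ℝ (Fin n), |y i₀| ^ q * Real.exp (-a * ‖y‖ ^ 2) := by
    rw [← (b.measurePreserving_repr_symm).integral_comp
      b.repr.symm.toHomeomorph.measurableEmbedding
      (fun x => |(inner ℝ x u : ℝ)| ^ q * Real.exp (-a * ‖x‖ ^ 2))]
    congr 1; ext y
    have h1 : (inner ℝ (b.repr.symm y) u : ℝ) = y i₀ := by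
      rw [← hbu, real_inner_comm, ← b.repr_apply_apply, LinearIsometryEquiv.apply_symm_apply]
    rw [h1, LinearIsometryEquiv.norm_map]
  rw [hrot]
  -- Step 3: transfer to the product space
  have hpi : ∫ y : EuclideanSpace ℝ (Fin n), |y i₀| ^ q * Real.exp (-a * ‖y‖ ^ 2)
      = ∫ w : Fin n → ℝ, |w i₀| ^ q * Real.exp (-a * ∑ i, w i ^ 2) := by
    rw [← ((EuclideanSpace.volume_preserving_symm_measurableEquiv_toLp (Fin n)).symm).integral_comp
      (MeasurableEquiv.measurableEmbedding _)
      (fun y : EuclideanSpace ℝ (Fin n) => |y i₀| ^ q * Real.exp (-a * ‖y‖ ^ 2))]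
    congr 1; ext w
    have h2 : (((MeasurableEquiv.toLp 2 (Fin n → ℝ)).symm).symm w) i₀ = w i₀ := rfl
    have h3 : ‖((MeasurableEquiv.toLp 2 (Fin n → ℝ)).symm).symm w‖ ^ 2 = ∑ i, w i ^ 2 := by
      rw [EuclideanSpace.norm_eq, Real.sq_sqrt (by positivity)]
      simp only [Real.norm_eq_abs, sq_abs]
      exact Finset.sum_congr rfl (fun i _ => rfl)
    rw [h2, h3]
  rw [hpi]
  -- Step 4: factor as a product
  set g : Fin n → ℝ → ℝ := fun i s =>
    if i = i₀ then |s| ^ q * Real.exp (-a * s ^ 2) else Real.exp (-a * s ^ 2) with hg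
  have step4 : ∀ w : Fin n → ℝ,
      |w i₀| ^ q * Real.exp (-a * ∑ i, w i ^ 2) = ∏ i, g i (w i) := by
    intro w
    have : Real.exp (-a * ∑ i, w i ^ 2) = ∏ i, Real.exp (-a * w i ^ 2) := by
      rw [← Real.exp_sum, Finset.mul_sum]
    rw [this, ← Finset.mul_prod_erase Finset.univ (fun i => Real.exp (-a * w i ^ 2))
        (Finset.mem_univ i₀), ← mul_assoc,
      ← Finset.mul_prod_erase Finset.univ (fun i => g i (w i)) (Finset.mem_univ i₀)]
    congr 1
    · simp [hg]
    · exact Finset.prod_congr rfl (fun i hi => by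
        simp [hg, (Finset.ne_of_mem_erase hi)])
  simp_rw [step4]
  rw [MeasureTheory.integral_fintype_prod_volume_eq_prod (ι := Fin n) g,
    ← Finset.mul_prod_erase Finset.univ (fun i => ∫ s : ℝ, g i s) (Finset.mem_univ i₀)]
  have hmom : ∫ s : ℝ, g i₀ s = a ^ (-(q + 1) / 2) * Real.Gamma ((q + 1) / 2) := by
    simp only [hg, if_pos rfl]
    exact moment1d ha hq
  have hgauss : ∀ i ∈ Finset.univ.erase i₀, (∫ s : ℝ, g i s) = Real.sqrt (π / a) := by
    intro i hi
    simp only [hg, if_neg (Finset.ne_of_mem_erase hi)]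
    exact integral_gaussian a
  rw [hmom, Finset.prod_congr rfl hgauss, Finset.prod_const,
    Finset.card_erase_of_mem (Finset.mem_univ i₀), Finset.card_univ, Fintype.card_fin]
  ring

set_option maxHeartbeats 2000000 in
/-- The key identity computing the sharp coefficient `K_{p,ℓ}(t)`:
`(2t(2√(πt))ⁿ det A^{1/2})⁻¹ (∫ |(A⁻¹z,ℓ)|^{p'} e^{-p'|A^{-1/2}z|²/(4t)} dz)^{1/p'}
 = |A^{-1/2}ℓ| (2ⁿπ^{(n+p-1)/2} det A^{1/2})^{-1/p} (Γ((p'+1)/2)/p'^{(n+p')/2})^{1/p'}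
   t^{-(n+p)/(2p)}`. Here `S` plays the role of `A^{1/2}`. -/
theorem sharp_coefficient_identity (n : ℕ) (A S : Matrix (Fin n) (Fin n) ℝ)
    (hAsymm : A.IsSymm) (hA : A.PosDef) (hS : S.PosDef) (hSA : S * S = A)
    (b : Fin n → ℝ) (c : ℝ) (ℓ : Fin n → ℝ) (hℓ : ℓ ⬝ᵥ ℓ = 1)
    (p p' : ℝ) (hp : 1 < p') (hpp' : 1 / p + 1 / p' = 1)
    (t : ℝ) (ht : 0 < t) :
    1 / (2 * t * (2 * Real.sqrt (π * t)) ^ n * S.det) *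
        (∫ z : Fin n → ℝ, |A⁻¹.mulVec z ⬝ᵥ ℓ| ^ p' *
          Real.exp (-(p' * (S⁻¹.mulVec z ⬝ᵥ S⁻¹.mulVec z)) / (4 * t))) ^ (1 / p') =
      Real.sqrt (S⁻¹.mulVec ℓ ⬝ᵥ S⁻¹.mulVec ℓ) /
          ((2 ^ n * π ^ (((n : ℝ) + p - 1) / 2) * S.det) ^ (1 / p)) *
        (Real.Gamma ((p' + 1) / 2) / p' ^ (((n : ℝ) + p') / 2)) ^ (1 / p') *
        (1 / t ^ (((n : ℝ) + p) / (2 * p))) := by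
  have hp'0 : (0:ℝ) < p' := lt_trans one_pos hp
  have hn : 0 < n := by
    rcases Nat.eq_zero_or_pos n with h | h
    · exfalso; subst h
      simp [dotProduct] at hℓ
    · exact h
  have hℓ0 : ℓ ≠ 0 := by
    intro h; rw [h] at hℓ; simp [dotProduct] at hℓ
  have hdS : 0 < S.det := hS.det_pos
  have hdSu : IsUnit S.det := isUnit_iff_ne_zero.2 hdS.ne'
  have hST : Sᵀ = S := by simpa using hS.isHermitian.eq
  have hSS : S⁻¹ * S = 1 := Matrix.nonsing_inv_mul S hdSu
  have hSS' : S * S⁻¹ = 1 := Matrix.mul_nonsing_inv S hdSu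
  have hAinv : A⁻¹ = S⁻¹ * S⁻¹ := by rw [← hSA, Matrix.mul_inv_rev]
  set v : Fin n → ℝ := S⁻¹.mulVec ℓ with hvdef
  have hv0 : v ≠ 0 := by
    intro h
    apply hℓ0
    have : S.mulVec v = S.mulVec 0 := by rw [h]
    rw [hvdef, Matrix.mulVec_mulVec, hSS', Matrix.one_mulVec, Matrix.mulVec_zero] at this
    exact this
  -- change of variables z = S y
  rw [cov_mulVec S hdS.ne' (fun z => |A⁻¹.mulVec z ⬝ᵥ ℓ| ^ p' *
      Real.exp (-(p' * (S⁻¹.mulVec z ⬝ᵥ S⁻¹.mulVec z)) / (4 * t))), abs_of_pos hdS]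
  have key1 : ∀ y : Fin n → ℝ, A⁻¹.mulVec (S.mulVec y) = S⁻¹.mulVec y := by
    intro y
    rw [Matrix.mulVec_mulVec, hAinv, Matrix.mul_assoc, hSS, Matrix.mul_one]
  have key2 : ∀ y : Fin n → ℝ, S⁻¹.mulVec (S.mulVec y) = y := by
    intro y
    rw [Matrix.mulVec_mulVec, hSS, Matrix.one_mulVec]
  have hdot : ∀ y : Fin n → ℝ, S⁻¹.mulVec y ⬝ᵥ ℓ = y ⬝ᵥ v := by
    intro y
    rw [dotProduct_comm, dotProduct_mulVec, hvdef,
      ← Matrix.mulVec_transpose, Matrix.transpose_nonsing_inv, hST, dotProduct_comm]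
  have hsimp : ∀ y : Fin n → ℝ,
      |A⁻¹.mulVec (S.mulVec y) ⬝ᵥ ℓ| ^ p' *
        Real.exp (-(p' * (S⁻¹.mulVec (S.mulVec y) ⬝ᵥ S⁻¹.mulVec (S.mulVec y))) / (4 * t))
      = |y ⬝ᵥ v| ^ p' * Real.exp (-(p' * (y ⬝ᵥ y)) / (4 * t)) := by
    intro y
    rw [key1, key2, hdot]
  simp only [hsimp]
  -- transfer to Euclidean space
  set a : ℝ := p' / (4 * t) with hadef
  have ha : 0 < a := by positivity
  set v' : EuclideanSpace ℝ (Fin n) := ((MeasurableEquiv.toLp 2 (Fin n → ℝ)).symm).symm v with hv'def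
  have hv' : v' ≠ 0 := by
    intro h
    apply hv0
    have := congrArg ((MeasurableEquiv.toLp 2 (Fin n → ℝ)).symm) h
    simpa [hv'def] using this
  have htrans : (∫ y : Fin n → ℝ, |y ⬝ᵥ v| ^ p' * Real.exp (-(p' * (y ⬝ᵥ y)) / (4 * t)))
      = ∫ x : EuclideanSpace ℝ (Fin n), |(inner ℝ x v' : ℝ)| ^ p' * Real.exp (-a * ‖x‖ ^ 2) := by
    rw [← (EuclideanSpace.volume_preserving_symm_measurableEquiv_toLp (Fin n)).integral_comp
      (MeasurableEquiv.measurableEmbedding _)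
      (fun y : Fin n → ℝ => |y ⬝ᵥ v| ^ p' * Real.exp (-(p' * (y ⬝ᵥ y)) / (4 * t)))]
    congr 1; ext x
    have h1 : ((MeasurableEquiv.toLp 2 (Fin n → ℝ)).symm) x ⬝ᵥ v = (inner ℝ x v' : ℝ) := by
      simp [dotProduct, PiLp.inner_apply, RCLike.inner_apply, hv'def]
      exact Finset.sum_congr rfl (fun i _ => mul_comm _ _)
    have h2 : ((MeasurableEquiv.toLp 2 (Fin n → ℝ)).symm) x ⬝ᵥ ((MeasurableEquiv.toLp 2 (Fin n → ℝ)).symm) x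
        = ‖x‖ ^ 2 := by
      rw [← real_inner_self_eq_norm_sq]
      simp [dotProduct, PiLp.inner_apply, RCLike.inner_apply]
      rw [EuclideanSpace.norm_eq, Real.sq_sqrt (by positivity)]
      simp [Real.norm_eq_abs, sq, abs_mul_abs_self]
    rw [h1, h2, hadef]
    congr 2
    ring
  rw [htrans, euclid_moment ⟨0, hn⟩ ha (by linarith) v' hv']
  -- norms
  have hNv : ‖v'‖ = Real.sqrt (v ⬝ᵥ v) := by
    rw [EuclideanSpace.norm_eq]
    congr 1
    simp only [Real.norm_eq_abs, sq_abs, dotProduct]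
    exact Finset.sum_congr rfl (fun i _ => by rw [sq]; rfl)
  rw [hNv]
  -- final algebra
  have hN : 0 < Real.sqrt (v ⬝ᵥ v) := hNv ▸ norm_pos_iff.2 hv'
  have hG : 0 < Real.Gamma ((p' + 1) / 2) := Real.Gamma_pos_of_pos (by linarith)
  have hip' : 1 / p' < 1 := by rw [div_lt_one hp'0]; exact hp
  have hp0 : 0 < p := by
    have : 0 < 1 / p := by linarith
    exact one_div_pos.mp this
  have hpe : p = p' / (p' - 1) := by
    have h1 : p' - 1 ≠ 0 := by linarith
    field_simp at hpp' ⊢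
    nlinarith [hpp']
  have hD : 0 < S.det := hdS
  have hcast : ((n - 1 : ℕ) : ℝ) = (n : ℝ) - 1 := by
    rw [Nat.cast_sub hn]; norm_num
  have h4 : Real.log 4 = 2 * Real.log 2 := by
    rw [show (4:ℝ) = 2 ^ (2:ℕ) by norm_num, Real.log_pow]; norm_num
  have hLpos : 0 < 1 / (2 * t * (2 * Real.sqrt (π * t)) ^ n * S.det) *
      (S.det * (Real.sqrt (v ⬝ᵥ v) ^ p' * (a ^ (-(p' + 1) / 2) * Real.Gamma ((p' + 1) / 2)) *
        Real.sqrt (π / a) ^ (n - 1))) ^ (1 / p') := by positivity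
  have hRpos : 0 < Real.sqrt (v ⬝ᵥ v) / (2 ^ n * π ^ (((n:ℝ) + p - 1) / 2) * S.det) ^ (1 / p) *
        (Real.Gamma ((p' + 1) / 2) / p' ^ (((n:ℝ) + p') / 2)) ^ (1 / p') *
      (1 / t ^ (((n:ℝ) + p) / (2 * p))) := by positivity
  refine Real.log_injOn_pos (Set.mem_Ioi.2 hLpos) (Set.mem_Ioi.2 hRpos) ?_
  simp only [hadef]
  rw [one_div, one_div, one_div]
  simp (disch := positivity) only [Real.log_mul, Real.log_div, Real.log_inv, Real.log_pow,
    Real.log_rpow, Real.log_sqrt, Real.log_one]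
  rw [h4, hcast]
  subst hpe
  have h1 : p' - 1 ≠ 0 := by linarith
  field_simp
  ring
end
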